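/- For every 0 < δ < ε and every almost disjoint family 𝒜 of infinite subsets of ℚ consisting of convergent sequences and closed discrete sets that is maximal among such families, there exists a closed discrete set D ⊆ ℚ with D ∈ ℐ(𝒜)⁺ such that δ < |x| < ε for every x ∈ D. -/

import Mathlib

open Filter Set

/-- The set `S ⊆ ℚ` is a sequence converging (in ℚ) to some point. -/
def ConvSeq (S : Set ℚ) : Prop :=
  S.Infinite ∧ ∃ q : ℚ, q ∉ S ∧ ∀ U ∈ nhds q, (S \ U).Finite

/-- `S ⊆ ℚ` is closed and discrete. -/
def ClosedDiscrete (S : Set ℚ) : Prop :=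
  IsClosed S ∧ ∀ x ∈ S, ∃ U ∈ nhds x, U ∩ S = {x}

/-- `𝒜` is an almost disjoint family of infinite subsets of ℚ. -/
def ADFamily (𝒜 : Set (Set ℚ)) : Prop :=
  (∀ A ∈ 𝒜, A.Infinite) ∧ ∀ A ∈ 𝒜, ∀ B ∈ 𝒜, A ≠ B → (A ∩ B).Finite

/-- `X ∈ ℐ(𝒜)⁺`. -/
def IPlus (𝒜 : Set (Set ℚ)) (X : Set ℚ) : Prop :=
  X.Infinite ∧ {A ∈ 𝒜 | (A ∩ X).Infinite}.Infinite

/-- `𝒜` is maximal: no infinite subset of ℚ is almost disjoint from all members. -/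
def MaximalAD (𝒜 : Set (Set ℚ)) : Prop :=
  ¬ ∃ X : Set ℚ, X.Infinite ∧ ∀ A ∈ 𝒜, (A ∩ X).Finite

/-- rationals in a real interval are infinite -/
lemma ratIoo_infinite {u v : ℝ} (h : u < v) : {x : ℚ | u < (x:ℝ) ∧ (x:ℝ) < v}.Infinite := by
  intro hfin
  obtain ⟨q, hq1, hq2⟩ := exists_rat_btwn h
  have hne : {x : ℚ | u < (x:ℝ) ∧ (x:ℝ) < v}.Nonempty := ⟨q, hq1, hq2⟩
  obtain ⟨m, hm, hmax⟩ := Set.Finite.exists_maximalFor id _ hfin hne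
  obtain ⟨q', hq1', hq2'⟩ := exists_rat_btwn hm.2
  have hmq : (m:ℝ) < q' := hq1'
  have : m = q' := le_antisymm (le_of_lt (by exact_mod_cast hmq)) (hmax ⟨lt_trans hm.1 hmq, hq2'⟩ (le_of_lt (by exact_mod_cast hmq)))
  rw [this] at hmq
  exact lt_irrefl _ hmq

/-- each member of the family meets some nbhd of each non-limit point finitely -/
lemma pointFin {B : Set ℚ} (h : ConvSeq B ∨ ClosedDiscrete B) :
    ∃ q : ℚ, ∀ x : ℚ, x ≠ q → ∃ U ∈ nhds x, (B ∩ U).Finite := by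
  rcases h with ⟨_, q, _, hconv⟩ | ⟨hcl, hdisc⟩
  · refine ⟨q, fun x hx => ?_⟩
    obtain ⟨U, V, hU, hV, hUV⟩ := t2_separation_nhds hx
    refine ⟨U, hU, (hconv V hV).subset ?_⟩
    rintro t ⟨htB, htU⟩
    exact ⟨htB, fun htV => Set.disjoint_left.1 hUV htU htV⟩
  · refine ⟨0, fun x _ => ?_⟩
    by_cases hx : x ∈ B
    · obtain ⟨U, hU, hUB⟩ := hdisc x hx
      exact ⟨U, hU, (Set.inter_comm U B ▸ hUB) ▸ Set.finite_singleton x⟩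
    · exact ⟨Bᶜ, hcl.isOpen_compl.mem_nhds hx, by simp⟩

/-- In any real interval there is a rational avoiding a finite union of members -/
lemma exists_rat_avoid {ℬ : Set (Set ℚ)} (hB : ℬ.Finite)
    (hk : ∀ B ∈ ℬ, ConvSeq B ∨ ClosedDiscrete B) {u v : ℝ} (huv : u < v) :
    ∃ x : ℚ, u < (x:ℝ) ∧ (x:ℝ) < v ∧ x ∉ ⋃₀ ℬ := by
  have hpt : ∀ B : Set ℚ, ∃ q : ℚ, B ∈ ℬ → ∀ x : ℚ, x ≠ q → ∃ U ∈ nhds x, (B ∩ U).Finite := by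
    intro B
    by_cases hBmem : B ∈ ℬ
    · obtain ⟨q, hq⟩ := pointFin (hk B hBmem); exact ⟨q, fun _ => hq⟩
    · exact ⟨0, fun h => absurd h hBmem⟩
  choose qf hqf using hpt
  have hL : (qf '' ℬ).Finite := hB.image qf
  obtain ⟨x₀, hx₀R, hx₀L⟩ := ((ratIoo_infinite huv).diff hL).nonempty
  have hU : ∀ B : Set ℚ, ∃ U, B ∈ ℬ → U ∈ nhds x₀ ∧ (B ∩ U).Finite := by
    intro B
    by_cases hBmem : B ∈ ℬ
    · obtain ⟨U, hU1, hU2⟩ := hqf B hBmem x₀ (fun he => hx₀L (he ▸ Set.mem_image_of_mem qf hBmem))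
      exact ⟨U, fun _ => ⟨hU1, hU2⟩⟩
    · exact ⟨univ, fun h => absurd h hBmem⟩
  choose Uf hUf using hU
  have hW : (⋂ B ∈ ℬ, Uf B) ∈ nhds x₀ := (Filter.biInter_mem hB).2 fun B hBmem => (hUf B hBmem).1
  obtain ⟨l, h, hx₀lh, hlh⟩ := mem_nhds_iff_exists_Ioo_subset.1 hW
  have hb1 : max u (l:ℝ) < (x₀:ℝ) := max_lt hx₀R.1 (by exact_mod_cast hx₀lh.1)
  have hb2 : (x₀:ℝ) < min v (h:ℝ) := lt_min hx₀R.2 (by exact_mod_cast hx₀lh.2)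
  have hBad : (⋃ B ∈ ℬ, (B ∩ Uf B)).Finite := hB.biUnion fun B hBmem => (hUf B hBmem).2
  obtain ⟨x, hxC, hxBad⟩ := ((ratIoo_infinite (hb1.trans hb2)).diff hBad).nonempty
  refine ⟨x, (le_max_left _ _).trans_lt hxC.1, hxC.2.trans_le (min_le_left _ _), ?_⟩
  rintro ⟨B, hBmem, hxB⟩
  have hxlh : x ∈ Set.Ioo l h := by
    constructor
    · exact_mod_cast (le_max_right u (l:ℝ)).trans_lt hxC.1
    · exact_mod_cast hxC.2.trans_le (min_le_right v (h:ℝ))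
  exact hxBad (Set.mem_biUnion hBmem ⟨hxB, by simpa using (Set.mem_iInter₂.1 (hlh hxlh)) B hBmem⟩)

lemma step_lemma {𝒜 : Set (Set ℚ)} (hmax : MaximalAD 𝒜)
    {ℬ : Set (Set ℚ)} (hB : ℬ.Finite) (hk : ∀ B ∈ ℬ, ConvSeq B ∨ ClosedDiscrete B)
    {c r : ℝ} (hcr : c < r) :
    ∃ A, A ∈ 𝒜 ∧ A ∉ ℬ ∧ ∃ T, T ⊆ A ∧ T.Infinite ∧
      (∀ t ∈ T, c < (t:ℝ) ∧ (t:ℝ) < r) ∧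
      ∀ η : ℝ, 0 < η → {t ∈ T | (t:ℝ) ≤ r - η}.Finite := by
  have hpos : ∀ k : ℕ, (0:ℝ) < 1/(k+1) := by
    intro k; positivity
  have hx : ∀ k : ℕ, ∃ x : ℚ, max c (r - 1/(k+1)) < (x:ℝ) ∧ (x:ℝ) < r ∧ x ∉ ⋃₀ ℬ := by
    intro k
    exact exists_rat_avoid hB hk (max_lt hcr (by linarith [hpos k]))
  choose x hx1 hx2 hx3 using hx
  set S := Set.range x with hS
  have hStail : ∀ η : ℝ, 0 < η → {t ∈ S | (t:ℝ) ≤ r - η}.Finite := by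
    intro η hη
    obtain ⟨N, hN⟩ := exists_nat_gt (1/η)
    apply Set.Finite.subset ((Set.finite_Iio N).image x)
    rintro t ⟨⟨k, rfl⟩, hle⟩
    refine ⟨k, ?_, rfl⟩
    have h1 : r - 1/(k+1:ℝ) < r - η :=
      lt_of_lt_of_le (lt_of_le_of_lt (le_max_right c _) (hx1 k)) hle
    have h2 : η < 1/(k+1:ℝ) := by linarith
    have h3 : (k:ℝ)+1 < 1/η := by
      rw [lt_div_iff₀ hη]
      rw [lt_div_iff₀ (by positivity : (0:ℝ) < (k:ℝ)+1)] at h2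
      linarith
    have : (k:ℝ) < N := by linarith
    exact_mod_cast this
  have hSinf : S.Infinite := by
    by_contra hfin
    rw [Set.not_infinite] at hfin
    have : Finite ↥S := hfin
    obtain ⟨⟨v, hv⟩, hfib⟩ := Finite.exists_infinite_fiber (fun k => (⟨x k, ⟨k, rfl⟩⟩ : S))
    rw [Set.infinite_coe_iff] at hfib
    have hvr : (v:ℝ) < r := by obtain ⟨k, hk⟩ := hv; exact hk ▸ hx2 k
    have hge : r ≤ (v:ℝ) := by
      apply le_of_forall_sub_le
      intro η hη
      obtain ⟨N, hN⟩ := exists_nat_gt (1/η)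
      obtain ⟨k, hk, hkN⟩ := hfib.exists_gt N
      have hxk : x k = v := by simpa [Subtype.ext_iff] using hk
      have h1 : 1/(k+1:ℝ) < η := by
        rw [div_lt_iff₀ (by positivity : (0:ℝ) < (k:ℝ)+1)]
        rw [div_lt_iff₀ hη] at hN
        have : (N:ℝ) < (k:ℝ)+1 := by exact_mod_cast Nat.lt_succ_of_lt hkN
        nlinarith
      have := lt_of_le_of_lt (le_max_right c (r - 1/(k+1))) (hx1 k)
      rw [hxk] at this
      linarith
    linarith
  rw [MaximalAD] at hmax
  push_neg at hmax
  obtain ⟨A, hA𝒜, hAS⟩ := hmax S hSinf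
  have hASinf : (A ∩ S).Infinite := hAS
  refine ⟨A, hA𝒜, ?_, A ∩ S, Set.inter_subset_left, hASinf, ?_, ?_⟩
  · intro hAB
    obtain ⟨t, htA, htS⟩ := hASinf.nonempty
    obtain ⟨k, rfl⟩ := htS
    exact hx3 k ⟨A, hAB, htA⟩
  · rintro t ⟨-, k, rfl⟩
    exact ⟨lt_of_le_of_lt (le_max_left _ _) (hx1 k), hx2 k⟩
  · intro η hη
    refine (hStail η hη).subset ?_
    rintro t ⟨⟨-, htS⟩, hle⟩
    exact ⟨htS, hle⟩

/-- For every `0 < δ < ε` and every mad family of convergent sequences and closed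
discrete subsets of ℚ, there is a closed discrete `D ∈ ℐ(𝒜)⁺` with
`δ < |x| < ε` for all `x ∈ D`. -/
theorem exists_closed_discrete_IPlus (𝒜 : Set (Set ℚ))
    (hAD : ADFamily 𝒜)
    (hkind : ∀ A ∈ 𝒜, ConvSeq A ∨ ClosedDiscrete A)
    (hmax : MaximalAD 𝒜)
    (δ ε : ℚ) (hδ : 0 < δ) (hδε : δ < ε) :
    ∃ D : Set ℚ, ClosedDiscrete D ∧ IPlus 𝒜 D ∧ ∀ x ∈ D, δ < |x| ∧ |x| < ε := by
  obtain ⟨r₀, hr₀irr, hr₀l, hr₀u⟩ := exists_irrational_btwn (show (δ:ℝ) < (ε:ℝ) by exact_mod_cast hδε)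
  -- the increasing sequence aₙ → r₀
  set a : ℕ → ℝ := fun n => r₀ - (r₀ - δ)/(n+1) with ha
  have hsub : (0:ℝ) < r₀ - δ := by linarith
  have ha0 : a 0 = δ := by simp [ha]
  have hamono : StrictMono a := by
    intro m n h
    have : (r₀ - δ)/(n+1) < (r₀ - δ)/(m+1) := by
      apply div_lt_div_of_pos_left hsub (by positivity)
      exact_mod_cast Nat.succ_lt_succ h
    simp only [ha]; linarith
  have haub : ∀ n, a n < r₀ := by
    intro n; simp only [ha]
    have : (0:ℝ) < (r₀ - δ)/(n+1) := by positivity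
    linarith
  have harange : ∀ x : ℝ, x < r₀ → ∃ N : ℕ, x < a N := by
    intro x hx
    obtain ⟨N, hN⟩ := exists_nat_gt ((r₀ - δ)/(r₀ - x))
    refine ⟨N, ?_⟩
    have hx' : (0:ℝ) < r₀ - x := by linarith
    rw [div_lt_iff₀ hx'] at hN
    have h2 : (r₀ - δ)/(N+1) < r₀ - x := by
      rw [div_lt_iff₀ (by positivity : (0:ℝ) < (N:ℝ)+1)]
      nlinarith
    simp only [ha]; linarith
  -- irrational points r n ∈ (a n, a (n+1))
  have hr : ∀ n : ℕ, ∃ ρ : ℝ, Irrational ρ ∧ a n < ρ ∧ ρ < a (n+1) :=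
    fun n => exists_irrational_btwn (hamono (Nat.lt_succ_self n))
  choose rr hrr1 hrr2 hrr3 using hr
  -- the key step lemma, specialized
  have key : ∀ ℬ : Set (Set ℚ), ℬ.Finite → ℬ ⊆ 𝒜 → ∀ n : ℕ,
      ∃ A, A ∈ 𝒜 ∧ A ∉ ℬ ∧ ∃ T, T ⊆ A ∧ T.Infinite ∧
        (∀ t ∈ T, a n < (t:ℝ) ∧ (t:ℝ) < rr n) ∧
        ∀ η : ℝ, 0 < η → {t ∈ T | (t:ℝ) ≤ rr n - η}.Finite := by
    intro ℬ hBfin hBsub n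
    exact step_lemma hmax hBfin (fun B hB => hkind B (hBsub hB)) (hrr2 n)
  choose fA hfA1 hfA2 fT hfT1 hfT2 hfT3 hfT4 using key
  -- recursively choose the Aₙ and Tₙ
  obtain ⟨G, hG0, hGs⟩ : ∃ G : ℕ → {s : Set (Set ℚ) // s.Finite ∧ s ⊆ 𝒜},
      (G 0).1 = ∅ ∧ ∀ n, (G (n+1)).1 =
        insert (fA (G n).1 (G n).2.1 (G n).2.2 n) (G n).1 :=
    ⟨fun n => Nat.rec ⟨∅, Set.finite_empty, Set.empty_subset 𝒜⟩
      (fun n p => ⟨insert (fA p.1 p.2.1 p.2.2 n) p.1,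
        p.2.1.insert _, Set.insert_subset (hfA1 p.1 p.2.1 p.2.2 n) p.2.2⟩) n,
     rfl, fun n => rfl⟩
  set An : ℕ → Set ℚ := fun n => fA (G n).1 (G n).2.1 (G n).2.2 n with hAn
  set Tn : ℕ → Set ℚ := fun n => fT (G n).1 (G n).2.1 (G n).2.2 n with hTn
  have hmem : ∀ n, An n ∈ 𝒜 := fun n => hfA1 _ _ _ n
  have hnotin : ∀ n, An n ∉ (G n).1 := fun n => hfA2 _ _ _ n
  have hT1 : ∀ n, Tn n ⊆ An n := fun n => hfT1 _ _ _ n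
  have hT2 : ∀ n, (Tn n).Infinite := fun n => hfT2 _ _ _ n
  have hT3 : ∀ n, ∀ t ∈ Tn n, a n < (t:ℝ) ∧ (t:ℝ) < rr n := fun n => hfT3 _ _ _ n
  have hT4 : ∀ n, ∀ η : ℝ, 0 < η → {t ∈ Tn n | (t:ℝ) ≤ rr n - η}.Finite :=
    fun n => hfT4 _ _ _ n
  have hGmem : ∀ m n, m < n → An m ∈ (G n).1 := by
    intro m n h
    induction n with
    | zero => omega
    | succ n ih =>
      rw [hGs n]
      rcases Nat.lt_succ_iff_lt_or_eq.1 h with h' | h'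
      · exact Set.mem_insert_iff.2 (Or.inr (ih h'))
      · subst h'; exact Set.mem_insert _ _
  have hinj : Function.Injective An := by
    have hne : ∀ m n, m < n → An m ≠ An n := by
      intro m n h he
      exact hnotin n (he ▸ hGmem m n h)
    intro m n h
    by_contra hmn
    rcases Nat.lt_or_ge m n with h' | h'
    · exact hne m n h' h
    · exact hne n m (lt_of_le_of_ne h' (Ne.symm hmn)) h.symm
  set D : Set ℚ := ⋃ n, Tn n with hD
  -- every rational has a neighbourhood meeting D finitely
  have claimC : ∀ x : ℚ, ∃ U ∈ nhds x, (D ∩ U).Finite := by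
    intro x
    rcases lt_trichotomy ((x:ℝ)) r₀ with hlt | heq | hgt
    · -- x below r₀
      obtain ⟨N, hN⟩ := harange x hlt
      have hU : ∀ n : ℕ, ∃ U ∈ nhds x, (Tn n ∩ U).Finite := by
        intro n
        rcases lt_trichotomy ((x:ℝ)) (rr n) with h | h | h
        · obtain ⟨q', hq1, hq2⟩ := exists_rat_btwn h
          refine ⟨Set.Iio q', Iio_mem_nhds (by exact_mod_cast hq1), ?_⟩
          refine (hT4 n (rr n - q') (by linarith)).subset ?_
          rintro t ⟨ht, htq⟩
          have : (t:ℝ) < q' := by exact_mod_cast htq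
          exact ⟨ht, by linarith⟩
        · exact absurd ⟨x, h⟩ (hrr1 n)
        · obtain ⟨q', hq1, hq2⟩ := exists_rat_btwn h
          refine ⟨Set.Ioi q', Ioi_mem_nhds (by exact_mod_cast hq2),
            Set.Finite.subset (Set.finite_empty) ?_⟩
          rintro t ⟨ht, htq⟩
          have h1 : (t:ℝ) < rr n := (hT3 n t ht).2
          have h2 : (q':ℝ) < t := by exact_mod_cast htq
          exact absurd h2 (not_lt.2 (by linarith))
      choose U hU1 hU2 using hU
      obtain ⟨q, hq1, hq2⟩ := exists_rat_btwn hN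
      refine ⟨Set.Iio q ∩ ⋂ n ∈ Set.Iio N, U n,
        inter_mem (Iio_mem_nhds (by exact_mod_cast hq1))
          ((Filter.biInter_mem (Set.finite_Iio N)).2 fun n _ => hU1 n), ?_⟩
      refine Set.Finite.subset ((Set.finite_Iio N).biUnion fun n _ => hU2 n) ?_
      rintro t ⟨htD, htq, htW⟩
      obtain ⟨n, htn⟩ := Set.mem_iUnion.1 htD
      by_cases hn : n < N
      · exact Set.mem_biUnion hn ⟨htn, Set.mem_iInter₂.1 htW n hn⟩
      · exfalso
        have h1 : a N ≤ a n := hamono.monotone (le_of_not_gt hn)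
        have h2 : a n < (t:ℝ) := (hT3 n t htn).1
        have h3 : (t:ℝ) < q := by exact_mod_cast htq
        linarith
    · exact absurd ⟨x, heq⟩ hr₀irr
    · -- x above r₀ : D lies entirely below r₀
      obtain ⟨q, hq1, hq2⟩ := exists_rat_btwn hgt
      refine ⟨Set.Ioi q, Ioi_mem_nhds (by exact_mod_cast hq2),
        Set.Finite.subset (Set.finite_empty) ?_⟩
      rintro t ⟨htD, htq⟩
      obtain ⟨n, htn⟩ := Set.mem_iUnion.1 htD
      have h1 : (t:ℝ) < rr n := (hT3 n t htn).2
      have h2 : rr n < a (n+1) := hrr3 n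
      have h3 : a (n+1) < r₀ := haub (n+1)
      have h4 : (q:ℝ) < t := by exact_mod_cast htq
      linarith
  refine ⟨D, ⟨?_, ?_⟩, ⟨?_, ?_⟩, ?_⟩
  · -- IsClosed D
    rw [← isOpen_compl_iff, isOpen_iff_mem_nhds]
    intro x hx
    obtain ⟨U, hUn, hUf⟩ := claimC x
    refine mem_of_superset
      (inter_mem hUn ((hUf.isClosed.isOpen_compl).mem_nhds fun h => hx h.1)) ?_
    rintro y ⟨hyU, hyc⟩ hyD
    exact hyc ⟨hyD, hyU⟩
  · -- discreteness
    intro x hx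
    obtain ⟨U, hUn, hUf⟩ := claimC x
    have hFfin : ((D ∩ U) \ {x}).Finite := hUf.diff
    refine ⟨U ∩ ((D ∩ U) \ {x})ᶜ,
      inter_mem hUn ((hFfin.isClosed.isOpen_compl).mem_nhds (by simp)), ?_⟩
    ext y
    constructor
    · rintro ⟨⟨hyU, hyF⟩, hyD⟩
      by_contra hyx
      exact hyF ⟨⟨hyD, hyU⟩, hyx⟩
    · rintro rfl
      exact ⟨⟨mem_of_mem_nhds hUn, fun h => h.2 rfl⟩, hx⟩
  · -- D infinite
    exact (hT2 0).mono (Set.subset_iUnion Tn 0)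
  · -- infinitely many members of 𝒜 meet D infinitely
    apply Set.infinite_of_injective_forall_mem hinj
    intro n
    exact ⟨hmem n, (hT2 n).mono (Set.subset_inter (hT1 n) (Set.subset_iUnion Tn n))⟩
  · -- bounds
    intro x hxD
    obtain ⟨n, hxn⟩ := Set.mem_iUnion.1 hxD
    obtain ⟨hx1, hx2⟩ := hT3 n x hxn
    have hδx : (δ:ℝ) < x := lt_of_le_of_lt (ha0 ▸ hamono.monotone (Nat.zero_le n)) hx1
    have hxε : (x:ℝ) < ε := by
      have := hrr3 n
      have := haub (n+1)
      linarith
    have hδx' : δ < x := by exact_mod_cast hδx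
    have hxε' : x < ε := by exact_mod_cast hxε
    have hxpos : 0 < x := lt_trans hδ hδx'
    rw [abs_of_pos hxpos]
    exact ⟨hδx', hxε'⟩
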